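/- arXiv:2311.03530 — 3 statements merged into one kernel-verified Lean document; each statement's English description precedes it below -/
import Mathlib

section
/- Sybil invariance of VBE: If a player P divides her tokens among a set of new accounts, all with utility vectors identical to P's, and the rest of the system is unchanged, then the min-entropy VBE under ε-threshold ordinal clustering is unchanged. -/
open Finset
open scoped Classical

/-- Total tokens held by the voting bloc of player `i` under relation `r`. -/
noncomputable def blocTok {ι : Type*} [Fintype ι] (tokens : ι → ℝ) (r : ι → ι → Prop) (i : ι) : ℝ :=
  ∑ j ∈ Finset.univ.filter (fun j => r i j), tokens j

/-- Token holdings of the largest voting bloc. -/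
noncomputable def maxBloc {ι : Type*} [Fintype ι] [Nonempty ι]
    (tokens : ι → ℝ) (r : ι → ι → Prop) : ℝ :=
  Finset.univ.sup' Finset.univ_nonempty (blocTok tokens r)

/-- Min-entropy VBE: `-log₂(largest bloc share)`. -/
noncomputable def vbe {ι : Type*} [Fintype ι] [Nonempty ι]
    (tokens : ι → ℝ) (r : ι → ι → Prop) : ℝ :=
  - Real.logb 2 (maxBloc tokens r / ∑ i, tokens i)

/-- ε-threshold ordinal clustering relation on players, from utility vectors. -/
def toc {ι E : Type*} (ε : ℝ) (U : ι → E → ℝ) (i j : ι) : Prop :=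
  ∀ e, Real.sign (U i e) = Real.sign (U j e) ∨ (|U i e| ≤ ε ∧ |U j e| ≤ ε)

/-- Sybil invariance: a player p dividing her tokens among new
accounts with identical utility vectors leaves the min-entropy VBE unchanged. -/
theorem vbe_sybil_invariance {ι σ E : Type*} [Fintype ι] [Nonempty ι] [Fintype σ]
    (ε : ℝ) (tokens : ι → ℝ) (tokens' : ι ⊕ σ → ℝ)
    (htok : ∀ i, 0 < tokens i) (htok' : ∀ a, 0 ≤ tokens' a)
    (U : ι → E → ℝ) (U' : ι ⊕ σ → E → ℝ) (p : ι)
    (hsplit : tokens' (Sum.inl p) + ∑ s, tokens' (Sum.inr s) = tokens p)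
    (hother : ∀ i, i ≠ p → tokens' (Sum.inl i) = tokens i)
    (hUold : ∀ i, U' (Sum.inl i) = U i)
    (hUnew : ∀ s, U' (Sum.inr s) = U p) :
    vbe tokens' (toc ε U') = vbe tokens (toc ε U) := by
  classical
  set f : ι ⊕ σ → ι := Sum.elim id (fun _ => p) with hf
  have hU' : ∀ a, U' a = U (f a) := by
    rintro (i | s)
    · exact hUold i
    · exact hUnew s
  have hrel : ∀ a b, toc ε U' a b ↔ toc ε U (f a) (f b) := by
    intro a b; rw [toc, toc, hU' a, hU' b]
  have hbloc : ∀ a, blocTok tokens' (toc ε U') a = blocTok tokens (toc ε U) (f a) := by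
    intro a
    unfold blocTok
    have hfilter : (Finset.univ.filter (fun j => toc ε U' a j))
        = Finset.univ.filter (fun j => toc ε U (f a) (f j)) := by
      apply Finset.filter_congr; intro j _; simp [hrel]
    rw [hfilter, Finset.sum_filter, Finset.sum_filter, Fintype.sum_sum_type]
    simp only [hf, Sum.elim_inl, Sum.elim_inr, id]
    have h1 : (∑ i, if toc ε U (Sum.elim id (fun _ => p) a) i then tokens' (Sum.inl i) else 0)
        = (∑ i ∈ Finset.univ.erase p, if toc ε U (Sum.elim id (fun _ => p) a) i then tokens i else 0)
          + (if toc ε U (Sum.elim id (fun _ => p) a) p then tokens' (Sum.inl p) else 0) := by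
      rw [← Finset.sum_erase_add _ _ (Finset.mem_univ p)]
      congr 1
      refine Finset.sum_congr rfl fun i hi => ?_
      rw [hother i (Finset.ne_of_mem_erase hi)]
    have h2 : (∑ s : σ, if toc ε U (Sum.elim id (fun _ => p) a) p then tokens' (Sum.inr s) else 0)
        = if toc ε U (Sum.elim id (fun _ => p) a) p then ∑ s : σ, tokens' (Sum.inr s) else 0 := by
      split_ifs <;> simp
    rw [h1, h2, add_assoc]
    have h3 : ((if toc ε U (Sum.elim id (fun _ => p) a) p then tokens' (Sum.inl p) else 0)
        + if toc ε U (Sum.elim id (fun _ => p) a) p then ∑ s : σ, tokens' (Sum.inr s) else 0)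
        = if toc ε U (Sum.elim id (fun _ => p) a) p then tokens p else 0 := by
      split_ifs
      · rw [hsplit]
      · simp
    rw [h3, Finset.sum_erase_add _ _ (Finset.mem_univ p)]
  have hmax : maxBloc tokens' (toc ε U') = maxBloc tokens (toc ε U) := by
    unfold maxBloc
    apply le_antisymm
    · apply Finset.sup'_le
      intro a _
      rw [hbloc a]
      exact Finset.le_sup' _ (Finset.mem_univ (f a))
    · apply Finset.sup'_le
      intro i _
      have : blocTok tokens (toc ε U) i = blocTok tokens' (toc ε U') (Sum.inl i) := by
        rw [hbloc]; simp [hf]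
      rw [this]
      exact Finset.le_sup' _ (Finset.mem_univ (Sum.inl i))
  have htot : ∑ a, tokens' a = ∑ i, tokens i := by
    rw [Fintype.sum_sum_type,
      ← Finset.sum_erase_add Finset.univ (fun i => tokens' (Sum.inl i)) (Finset.mem_univ p),
      add_assoc, hsplit, ← Finset.sum_erase_add Finset.univ tokens (Finset.mem_univ p)]
    congr 1
    exact Finset.sum_congr rfl fun i hi => hother i (Finset.ne_of_mem_erase hi)
  unfold vbe
  rw [hmax, htot]
end

section
/- Voting slates centralize: If all elections E are bundled into a smaller set of slate elections E', where a player's utility on a slate is the sum of its utilities on the underlying proposals, and players clustered together on E remain clustered on E', then the min-entropy VBE over E' is at most the VBE over E. -/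
open Finset
open scoped Classical

/-- Voting slates centralize: bundling elections E into slates E'
(utility on a slate = sum of underlying utilities), under the assumption that
players clustered on E agree in sign on every slate, can only lower the VBE. -/
theorem vbe_slates {ι E : Type*} [Fintype ι] [Nonempty ι] [Fintype E]
    (ε : ℝ) (tokens : ι → ℝ) (htok : ∀ i, 0 < tokens i)
    (U : ι → E → ℝ) (E' : Finset (Finset E))
    (halign : ∀ i j, toc ε U i j → ∀ s ∈ E',
      Real.sign (∑ e ∈ s, U i e) = Real.sign (∑ e ∈ s, U j e)) :
    vbe tokens (toc ε (fun i (s : {x // x ∈ E'}) => ∑ e ∈ s.1, U i e)) ≤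
      vbe tokens (toc ε U) := by
  have hT : (0:ℝ) < ∑ i, tokens i := Finset.sum_pos (fun i _ => htok i) Finset.univ_nonempty
  have hle : maxBloc tokens (toc ε U) ≤
      maxBloc tokens (toc ε (fun i (s : {x // x ∈ E'}) => ∑ e ∈ s.1, U i e)) := by
    apply Finset.sup'_le
    intro i _
    refine le_trans ?_ (Finset.le_sup' _ (Finset.mem_univ i))
    apply Finset.sum_le_sum_of_subset_of_nonneg
    · intro j hj
      simp only [Finset.mem_filter, Finset.mem_univ, true_and] at hj ⊢
      intro s
      exact Or.inl (halign i j hj s.1 s.2)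
    · exact fun j _ _ => (htok j).le
  have hpos : 0 < maxBloc tokens (toc ε U) := by
    obtain ⟨i⟩ := ‹Nonempty ι›
    refine lt_of_lt_of_le ?_ (Finset.le_sup' _ (Finset.mem_univ i))
    refine Finset.sum_pos (fun j _ => htok j) ⟨i, ?_⟩
    simp only [Finset.mem_filter, Finset.mem_univ, true_and]
    exact fun e => Or.inl rfl
  unfold vbe
  apply neg_le_neg
  exact Real.logb_le_logb_of_le (by norm_num) (div_pos hpos hT)
    (div_le_div_of_nonneg_right hle hT.le)
end

section
/- Pivotal-bribe cheapness: In a binary majority election with an odd number n of rational voters each with utility U > 0 for 'yes', the bribery scheme paying P+ε to a pivotal 'no' voter (where the bribe P exceeds 2U) and ε to any non-pivotal 'no' voter makes voting 'no' a weakly dominant strategy for every voter; hence if all voters are rational and offered the bribe, all vote 'no', no voter is pivotal, and the briber's total cost is n·ε, which tends to 0 as ε → 0. -/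
open scoped Classical

/-- Pivotal-bribe cheapness: in a binary majority election with
an odd number n > 1 of voters, each with utility U > 0 for 'yes', the scheme
paying P+ε (P ≥ 2U) to a pivotal 'no' voter and ε to any other 'no' voter makes
voting 'no' weakly dominant; if everyone votes 'no' nobody is pivotal, the total
cost is n·ε, and it tends to 0 as ε → 0. -/
theorem pivotal_bribe (n : ℕ) (hodd : Odd n) (hn : 1 < n)
    (U P ε : ℝ) (hU : 0 < U) (hε : 0 < ε) (hP : 2 * U ≤ P) :
    let yesCount : (Fin n → Bool) → ℕ :=
      fun v => (Finset.univ.filter (fun i => v i = true)).card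
    let noCount : (Fin n → Bool) → ℕ :=
      fun v => (Finset.univ.filter (fun i => v i = false)).card
    let yesWins : (Fin n → Bool) → Prop := fun v => n < 2 * yesCount v
    let pivotal : (Fin n → Bool) → Prop := fun v => noCount v = (n + 1) / 2
    let bribe : Fin n → (Fin n → Bool) → ℝ := fun i v =>
      if v i = false then (if pivotal v then P + ε else ε) else 0
    let payoff : Fin n → (Fin n → Bool) → ℝ := fun i v =>
      (if yesWins v then U else -U) + bribe i v
    (∀ (v : Fin n → Bool) (i : Fin n),
        payoff i (Function.update v i true) ≤ payoff i (Function.update v i false)) ∧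
    ¬ pivotal (fun _ => false) ∧
    (∑ i : Fin n, bribe i (fun _ => false)) = n * ε ∧
    Filter.Tendsto (fun e : ℝ => (n : ℝ) * e) (nhds 0) (nhds 0) := by
  intro yesCount noCount yesWins pivotal bribe payoff
  obtain ⟨m, hm⟩ := hodd
  refine ⟨?_, ?_, ?_, ?_⟩
  · intro v i
    set w := Function.update v i false with hwdef
    have hwi : w i = false := Function.update_self i false v
    have hupd : Function.update v i true = Function.update w i true := by
      simp [hwdef, Function.update_idem]
    rw [hupd]
    set t := Function.update w i true with htdef
    have hti : t i = true := Function.update_self i true w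
    -- counting facts
    have hA : yesCount t = yesCount w + 1 := by
      have hset : Finset.univ.filter (fun j => t j = true)
          = insert i (Finset.univ.filter (fun j => w j = true)) := by
        ext j
        by_cases h : j = i <;>
          simp [htdef, Function.update_apply, h, hwi]
      show (Finset.univ.filter (fun j => t j = true)).card = _
      rw [hset, Finset.card_insert_of_notMem (by simp [hwi])]
    have hC : yesCount w + noCount w = n := by
      have h := Finset.card_filter_add_card_filter_not
        (s := (Finset.univ : Finset (Fin n))) (p := fun j => w j = true)
      simpa using h
    have hCt : yesCount t + noCount t = n := by
      have h := Finset.card_filter_add_card_filter_not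
        (s := (Finset.univ : Finset (Fin n))) (p := fun j => t j = true)
      simpa using h
    -- bribe values
    have hbt : bribe i t = 0 := by simp [bribe, hti]
    have hbw : bribe i w = if pivotal w then P + ε else ε := by
      simp [bribe, hwi]
    by_cases hw : yesWins w
    · have ht : yesWins t := by
        have : n < 2 * yesCount w := hw
        simp only [yesWins]
        omega
      simp only [payoff, if_pos hw, if_pos ht, hbt, hbw]
      split_ifs <;> linarith
    · by_cases ht : yesWins t
      · have hyc : yesCount w = m := by
          have h1 : ¬ n < 2 * yesCount w := hw
          have h2 : n < 2 * yesCount t := ht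
          omega
        have hp : pivotal w := by
          show noCount w = (n + 1) / 2
          omega
        simp only [payoff, if_pos ht, if_neg hw, hbt, hbw]
        rw [if_pos hp]
        linarith
      · simp only [payoff, if_neg ht, if_neg hw, hbt, hbw]
        split_ifs <;> linarith
  · show noCount (fun _ => false) = (n + 1) / 2 → False
    intro h
    have : noCount (fun _ => false) = n := by
      simp [noCount]
    omega
  · have hnp : ¬ pivotal (fun _ => false) := by
      show ¬ noCount (fun _ => false) = (n + 1) / 2
      have : noCount (fun _ => false) = n := by simp [noCount]
      omega
    have : ∀ i : Fin n, bribe i (fun _ => false) = ε := by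
      intro i; simp [bribe, hnp]
    rw [Finset.sum_congr rfl (fun i _ => this i)]
    simp [mul_comm]
  · simpa using Filter.Tendsto.const_mul (n : ℝ) (Filter.tendsto_id (x := nhds (0:ℝ)))
end
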